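/- Let $\beta > 0$, $Q > 0$, $M \in \mathbb{R}$, and define $f : (0,\infty) \to \mathbb{R}$ by $f(r) = 1 - \frac{2 \beta^2 Q}{3} - \frac{2M}{r} + \frac{4 \beta Q^{3/2}}{3 r}\left(\frac{\pi}{2} - \arctan\frac{r \beta}{\sqrt{Q}}\right) + \frac{2 \beta^4 r^2}{3} \log\left(1 + \frac{Q}{\beta^2 r^2}\right)$, and set $U = \frac{\pi \beta Q^{3/2}}{3}$. Then $\lim_{r \to 0^+}\left(f(r) - \frac{2(U - M)}{r}\right) = 1 - 2 Q \beta^2$. -/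

import Mathlib

open Filter Topology

lemma log_one_add_le_two_sqrt {x : ℝ} (hx : 0 ≤ x) :
    Real.log (1 + x) ≤ 2 * Real.sqrt x := by
  have h1 : Real.log (1 + x) = 2 * Real.log (Real.sqrt (1 + x)) := by
    rw [Real.log_sqrt (by linarith)]; ring
  have h2 : Real.log (Real.sqrt (1 + x)) ≤ Real.sqrt (1 + x) - 1 :=
    Real.log_le_sub_one_of_pos (Real.sqrt_pos.mpr (by linarith))
  have h3 : Real.sqrt (1 + x) ≤ 1 + Real.sqrt x := by
    have h : (1 : ℝ) + x ≤ (1 + Real.sqrt x) ^ 2 := by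
      have := Real.sq_sqrt hx
      have hs := Real.sqrt_nonneg x
      nlinarith
    calc Real.sqrt (1 + x) ≤ Real.sqrt ((1 + Real.sqrt x) ^ 2) := Real.sqrt_le_sqrt h
      _ = 1 + Real.sqrt x := Real.sqrt_sq (by positivity)
  linarith

theorem frolovHayward_small_r_expansion
    (β Q M : ℝ) (hβ : 0 < β) (hQ : 0 < Q) (f : ℝ → ℝ)
    (hf : f = fun r => 1 - 2 * β ^ 2 * Q / 3 - 2 * M / r
      + 4 * β * (Q * Real.sqrt Q) / (3 * r) * (Real.pi / 2 - Real.arctan (r * β / Real.sqrt Q))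
      + 2 * β ^ 4 * r ^ 2 / 3 * Real.log (1 + Q / (β ^ 2 * r ^ 2)))
    (U : ℝ) (hU : U = Real.pi * β * (Q * Real.sqrt Q) / 3) :
    Tendsto (fun r => f r - 2 * (U - M) / r) (𝓝[>] (0 : ℝ))
      (𝓝 (1 - 2 * Q * β ^ 2)) := by
  have hsQ : 0 < Real.sqrt Q := Real.sqrt_pos.mpr hQ
  have hQsq : Real.sqrt Q * Real.sqrt Q = Q := Real.mul_self_sqrt hQ.le
  set c : ℝ := β / Real.sqrt Q with hc
  -- L1 : arctan(r*c)/r → c as r → 0⁺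
  have hD : HasDerivAt (fun r : ℝ => Real.arctan (r * c)) c 0 := by
    have h0 : HasDerivAt (fun r : ℝ => r * c) c 0 := hasDerivAt_mul_const c
    have h1 := (Real.hasDerivAt_arctan ((0:ℝ) * c)).comp 0 h0
    simp at h1; exact h1
  have L1 : Tendsto (fun r : ℝ => Real.arctan (r * c) / r) (𝓝[>] 0) (𝓝 c) := by
    have hslope := hasDerivAt_iff_tendsto_slope.mp hD
    have h2 : Tendsto (slope (fun r : ℝ => Real.arctan (r * c)) 0) (𝓝[>] 0) (𝓝 c) :=
      hslope.mono_left (nhdsWithin_mono 0 (fun x hx => ne_of_gt hx))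
    refine h2.congr (fun r => ?_)
    simp [slope_def_field, div_eq_mul_inv, mul_comm]
  -- L2 : r² log(1 + Q/(β²r²)) → 0
  have L2 : Tendsto (fun r : ℝ => r ^ 2 * Real.log (1 + Q / (β ^ 2 * r ^ 2)))
      (𝓝[>] 0) (𝓝 0) := by
    have hb : Tendsto (fun r : ℝ => 2 * Real.sqrt Q / β * r) (𝓝[>] 0) (𝓝 0) := by
      have h : Tendsto (fun r : ℝ => 2 * Real.sqrt Q / β * r) (𝓝 0)
          (𝓝 (2 * Real.sqrt Q / β * 0)) :=
        (continuous_const.mul continuous_id).tendsto 0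
      rw [mul_zero] at h
      exact h.mono_left nhdsWithin_le_nhds
    refine squeeze_zero_norm' ?_ hb
    filter_upwards [self_mem_nhdsWithin] with r (hr : 0 < r)
    have hx : 0 ≤ Q / (β ^ 2 * r ^ 2) := by positivity
    have hlog0 : 0 ≤ Real.log (1 + Q / (β ^ 2 * r ^ 2)) :=
      Real.log_nonneg (by linarith)
    have hle := log_one_add_le_two_sqrt hx
    have hsqrt : Real.sqrt (Q / (β ^ 2 * r ^ 2)) = Real.sqrt Q / (β * r) := by
      rw [show β ^ 2 * r ^ 2 = (β * r) ^ 2 by ring, Real.sqrt_div hQ.le,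
        Real.sqrt_sq (by positivity)]
    rw [hsqrt] at hle
    rw [Real.norm_of_nonneg (by positivity)]
    have h2 : r ^ 2 * Real.log (1 + Q / (β ^ 2 * r ^ 2))
        ≤ r ^ 2 * (2 * (Real.sqrt Q / (β * r))) :=
      mul_le_mul_of_nonneg_left hle (by positivity)
    calc r ^ 2 * Real.log (1 + Q / (β ^ 2 * r ^ 2))
        ≤ r ^ 2 * (2 * (Real.sqrt Q / (β * r))) := h2
      _ = 2 * Real.sqrt Q / β * r := by field_simp
  -- assemble
  have Lmain : Tendsto (fun r : ℝ => (1 - 2 * β ^ 2 * Q / 3)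
      - 4 * β * (Q * Real.sqrt Q) / 3 * (Real.arctan (r * c) / r)
      + 2 * β ^ 4 / 3 * (r ^ 2 * Real.log (1 + Q / (β ^ 2 * r ^ 2))))
      (𝓝[>] 0) (𝓝 (1 - 2 * Q * β ^ 2)) := by
    have h : Tendsto (fun r : ℝ => (1 - 2 * β ^ 2 * Q / 3)
        - 4 * β * (Q * Real.sqrt Q) / 3 * (Real.arctan (r * c) / r)
        + 2 * β ^ 4 / 3 * (r ^ 2 * Real.log (1 + Q / (β ^ 2 * r ^ 2))))
        (𝓝[>] 0) (𝓝 ((1 - 2 * β ^ 2 * Q / 3) - 4 * β * (Q * Real.sqrt Q) / 3 * c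
          + 2 * β ^ 4 / 3 * 0)) :=
      (tendsto_const_nhds.sub (L1.const_mul (4 * β * (Q * Real.sqrt Q) / 3))).add
        (L2.const_mul (2 * β ^ 4 / 3))
    have hval : (1 - 2 * β ^ 2 * Q / 3) - 4 * β * (Q * Real.sqrt Q) / 3 * c
        + 2 * β ^ 4 / 3 * 0 = 1 - 2 * Q * β ^ 2 := by
      rw [hc]
      field_simp
      nlinarith [hQsq]
    rw [← hval]
    exact h
  refine Lmain.congr' ?_
  filter_upwards [self_mem_nhdsWithin] with r (hr : 0 < r)
  have hrne : r ≠ 0 := ne_of_gt hr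
  have harg : r * β / Real.sqrt Q = r * c := by rw [hc, mul_div_assoc]
  subst hf hU
  simp only [harg]
  field_simp
  ring
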